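/- Let a_1, a_2, a_3 ≥ 2 be pairwise coprime positive integers and b_1, b_2, b_3 positive integers with 0 < b_i < a_i, satisfying b_1/a_1 + b_2/a_2 + b_3/a_3 = 1 + ε/(a_1 a_2 a_3) with ε ∈ {−1,1}, ordered with b_1/a_1 > b_2/a_2 > b_3/a_3, and with (a_1,a_2,a_3,b_1,b_2,b_3) ≠ (2,3,5,1,1,1). Then there exist positive integers α < m such that b_1/a_1 < (m−α)/m, b_2/a_2 < α/m, and b_3/a_3 < 1/m. -/

import Mathlib

set_option maxHeartbeats 1000000

theorem stmt_19 (a₁ a₂ a₃ b₁ b₂ b₃ ε : ℤ)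
    (ha₁ : 2 ≤ a₁) (ha₂ : 2 ≤ a₂) (ha₃ : 2 ≤ a₃)
    (hcop12 : IsCoprime a₁ a₂) (hcop13 : IsCoprime a₁ a₃) (hcop23 : IsCoprime a₂ a₃)
    (hb₁ : 0 < b₁) (hb₁' : b₁ < a₁) (hb₂ : 0 < b₂) (hb₂' : b₂ < a₂)
    (hb₃ : 0 < b₃) (hb₃' : b₃ < a₃)
    (hε : ε = 1 ∨ ε = -1)
    (heq : (b₁ : ℚ) / a₁ + (b₂ : ℚ) / a₂ + (b₃ : ℚ) / a₃
      = 1 + (ε : ℚ) / ((a₁ : ℚ) * a₂ * a₃))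
    (hord₁ : (b₂ : ℚ) / a₂ < (b₁ : ℚ) / a₁) (hord₂ : (b₃ : ℚ) / a₃ < (b₂ : ℚ) / a₂)
    (hP : (a₁, a₂, a₃, b₁, b₂, b₃) ≠ (2, 3, 5, 1, 1, 1)) :
    ∃ α m : ℤ, 0 < α ∧ α < m ∧
      (b₁ : ℚ) / a₁ < ((m : ℚ) - α) / m ∧
      (b₂ : ℚ) / a₂ < (α : ℚ) / m ∧
      (b₃ : ℚ) / a₃ < 1 / (m : ℚ) := by
  classical
  have hA₁ : (0:ℤ) < a₁ := by omega
  have hA₂ : (0:ℤ) < a₂ := by omega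
  have hA₃ : (0:ℤ) < a₃ := by omega
  have qa₁ : (0:ℚ) < (a₁:ℚ) := by exact_mod_cast hA₁
  have qa₂ : (0:ℚ) < (a₂:ℚ) := by exact_mod_cast hA₂
  have qa₃ : (0:ℚ) < (a₃:ℚ) := by exact_mod_cast hA₃
  have E : b₁*(a₂*a₃) + b₂*(a₁*a₃) + b₃*(a₁*a₂) = a₁*(a₂*a₃) + ε := by
    have h : ((b₁*(a₂*a₃) + b₂*(a₁*a₃) + b₃*(a₁*a₂) : ℤ) : ℚ) = ((a₁*(a₂*a₃) + ε : ℤ) : ℚ) := by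
      push_cast
      field_simp at heq
      linarith [heq]
    exact_mod_cast h
  have hu : b₂*a₁ < b₁*a₂ := by
    rw [div_lt_div_iff₀ qa₂ qa₁] at hord₁; exact_mod_cast hord₁
  have hw : b₃*a₂ < b₂*a₃ := by
    rw [div_lt_div_iff₀ qa₃ qa₂] at hord₂; exact_mod_cast hord₂
  obtain ⟨D, hDdef⟩ : ∃ D : ℤ, D = (a₁ - b₁)*a₂ - a₁*b₂ := ⟨_, rfl⟩
  have hD : a₃*D = a₁*a₂*b₃ - ε := by rw [hDdef]; linarith [E]
  have hεb : ε ≤ 1 ∧ -1 ≤ ε := by rcases hε with h|h <;> omega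
  have h4 : 4 ≤ a₁*a₂*b₃ := by
    calc (4:ℤ) ≤ a₁*a₂ := by nlinarith
    _ ≤ a₁*a₂*b₃ := le_mul_of_one_le_right (by positivity) hb₃
  have hD1 : 1 ≤ D := by nlinarith [hD, h4]
  have hD1' : 1 ≤ (a₁-b₁)*a₂ - a₁*b₂ := by rw [← hDdef]; exact hD1
  -- final helper
  have final : ∀ m α : ℤ, 0 < m → b₂*m < a₂*α → a₁*α < (a₁ - b₁)*m → b₃*m < a₃ →
      ∃ α m : ℤ, 0 < α ∧ α < m ∧
      (b₁ : ℚ) / a₁ < ((m : ℚ) - α) / m ∧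
      (b₂ : ℚ) / a₂ < (α : ℚ) / m ∧
      (b₃ : ℚ) / a₃ < 1 / (m : ℚ) := by
    intro m α hm h1 h2 h3
    have hαpos : 0 < α := by nlinarith
    have hαm : α < m := by nlinarith
    have qm : (0:ℚ) < (m:ℚ) := by exact_mod_cast hm
    refine ⟨α, m, hαpos, hαm, ?_, ?_, ?_⟩
    · rw [div_lt_div_iff₀ qa₁ qm]
      have h : ((a₁*α : ℤ):ℚ) < (((a₁ - b₁)*m : ℤ):ℚ) := by exact_mod_cast h2
      push_cast at h ⊢
      nlinarith [h]
    · rw [div_lt_div_iff₀ qa₂ qm]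
      have h : ((b₂*m : ℤ):ℚ) < ((a₂*α : ℤ):ℚ) := by exact_mod_cast h1
      push_cast at h ⊢
      linarith
    · rw [div_lt_div_iff₀ qa₃ qm]
      have h : ((b₃*m : ℤ):ℚ) < ((a₃ : ℤ):ℚ) := by exact_mod_cast h3
      push_cast at h ⊢
      linarith
  -- minimal m
  have h5 : 2*a₁*1 ≤ 2*a₁*((a₁-b₁)*a₂ - a₁*b₂) :=
    mul_le_mul_of_nonneg_left hD1' (by positivity)
  have hex : Set.Nonempty {n : ℕ | 0 < (n:ℤ) ∧ ∃ α : ℤ, b₂*(n:ℤ) < a₂*α ∧ a₁*α < (a₁-b₁)*(n:ℤ)} := by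
    clear final heq hord₁ hord₂ hP hcop12 hcop13 hcop23
    have ht : (((2*a₁*a₂).toNat : ℕ) : ℤ) = 2*a₁*a₂ := Int.toNat_of_nonneg (by positivity)
    have p1 : (0:ℤ) < 2*a₁*a₂ := by positivity
    have p2 : b₂*(2*a₁*a₂) < a₂*(2*a₁*b₂ + 1) := by nlinarith
    have p3 : a₁*(2*a₁*b₂ + 1) < (a₁-b₁)*(2*a₁*a₂) := by nlinarith [hD1', hA₁]
    refine ⟨(2*a₁*a₂).toNat, ?_⟩
    simp only [Set.mem_setOf_eq, ht]
    exact ⟨p1, 2*a₁*b₂ + 1, p2, p3⟩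
  obtain ⟨n, ⟨hn0, α, hα1, hα2⟩, hminn⟩ := Nat.lt_wfRel.wf.has_min _ hex
  obtain ⟨m, hm⟩ : ∃ m : ℤ, m = (n:ℤ) := ⟨_, rfl⟩
  rw [← hm] at hn0 hα1 hα2
  have hmin : ∀ k : ℤ, 0 < k → k < m → ¬ ∃ β : ℤ, b₂*k < a₂*β ∧ a₁*β < (a₁-b₁)*k := by
    intro k hk hkm ⟨β, h1, h2⟩
    have h1' : (k.toNat : ℤ) = k := Int.toNat_of_nonneg (le_of_lt hk)
    refine hminn k.toNat ⟨by rw [h1']; exact hk, β, by rw [h1']; exact h1, by rw [h1']; exact h2⟩ ?_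
    have : (k.toNat : ℤ) < (n:ℤ) := by rw [h1', hm] at *; exact hkm
    exact_mod_cast this
  clear hminn hm hex n
  -- basic facts about m and α
  have hαpos : 0 < α := by nlinarith
  have hαm : α < m := by nlinarith [mul_pos hb₁ hn0]
  have hm2 : 2 ≤ m := by
    by_contra hcon
    have hm1 : m = 1 := by omega
    rw [hm1] at hα1 hα2
    nlinarith
  -- α and m are coprime
  have hg : Int.gcd α m = 1 := by
    by_contra hgne
    have hgpos : 2 ≤ (Int.gcd α m : ℤ) := by
      have h0 : Int.gcd α m ≠ 0 := by
        intro h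
        rw [Int.gcd_eq_zero_iff] at h
        omega
      omega
    obtain ⟨α', e1⟩ := (Int.gcd_dvd_left α m : ((Int.gcd α m : ℤ)) ∣ α)
    obtain ⟨m', e2⟩ := (Int.gcd_dvd_right α m : ((Int.gcd α m : ℤ)) ∣ m)
    have hm'pos : 0 < m' := by nlinarith
    have hm'm : m' < m := by nlinarith
    refine hmin m' hm'pos hm'm ⟨α', ?_, ?_⟩
    · by_contra hcc
      push_neg at hcc
      nlinarith [mul_le_mul_of_nonneg_left hcc (by positivity : (0:ℤ) ≤ (Int.gcd α m : ℤ))]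
    · by_contra hcc
      push_neg at hcc
      nlinarith [mul_le_mul_of_nonneg_left hcc (by positivity : (0:ℤ) ≤ (Int.gcd α m : ℤ))]
  obtain ⟨x, y, hxy⟩ := Int.isCoprime_iff_gcd_eq_one.mpr hg
  -- build r, R, l, L
  obtain ⟨q, hq⟩ : ∃ q : ℤ, q = (-x)/m := ⟨_, rfl⟩
  obtain ⟨r, hrdef⟩ : ∃ r : ℤ, r = (-x) % m := ⟨_, rfl⟩
  have hrdef' : r = -x - m*q := by rw [hrdef, hq, Int.emod_def]
  have hr0 : 0 ≤ r := by rw [hrdef]; exact Int.emod_nonneg _ (by omega)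
  have hrm : r < m := by rw [hrdef]; exact Int.emod_lt_of_pos _ (by omega)
  obtain ⟨R, hRdef⟩ : ∃ R : ℤ, R = y - q*α := ⟨_, rfl⟩
  have hRm : R*m = r*α + 1 := by linear_combination m*hRdef - α*hrdef' + hxy
  have hr1 : 1 ≤ r := by
    rcases eq_or_lt_of_le hr0 with h|h
    · exfalso
      rw [← h] at hRm
      simp at hRm
      rcases le_or_gt R 0 with hR0|hR0 <;> nlinarith
    · omega
  obtain ⟨l, hldef⟩ : ∃ l : ℤ, l = m - r := ⟨_, rfl⟩
  obtain ⟨L, hLdef⟩ : ∃ L : ℤ, L = α - R := ⟨_, rfl⟩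
  have hl1 : 1 ≤ l := by omega
  have hlm : l < m := by omega
  have hRl : R*l - L*r = 1 := by linear_combination R*hldef - r*hLdef + hRm
  have hαl : α*l - L*m = 1 := by linear_combination α*hldef - m*hLdef + hRm
  -- minimality: L/l ≤ b₂/a₂ and (a₁-b₁)/a₁ ≤ R/r
  have hL : L*a₂ ≤ l*b₂ := by
    by_contra hcon
    push_neg at hcon
    refine hmin l (by omega) hlm ⟨L, by linarith, ?_⟩
    have e2 : a₁*(α*l) - a₁*(L*m) = a₁ := by linear_combination a₁*hαl
    have e3 : (a₁*α)*l < ((a₁-b₁)*m)*l := by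
      exact mul_lt_mul_of_pos_right hα2 (by omega)
    have h1 : (a₁*L)*m < ((a₁-b₁)*l)*m := by linarith
    exact lt_of_mul_lt_mul_right h1 (by omega)
  have hR : (a₁-b₁)*r ≤ a₁*R := by
    by_contra hcon
    push_neg at hcon
    refine hmin r (by omega) hrm ⟨R, ?_, by linarith⟩
    have e2 : a₂*(R*m) = a₂*(r*α) + a₂ := by linear_combination a₂*hRm
    have e3 : (b₂*m)*r < (a₂*α)*r := by
      exact mul_lt_mul_of_pos_right hα1 (by omega)
    have h1 : (b₂*r)*m < (a₂*R)*m := by linarith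
    exact lt_of_mul_lt_mul_right h1 (by omega)
  -- key identity
  have ID : a₁*a₂ - l*r*D = a₂*l*(a₁*R - (a₁-b₁)*r) + a₁*r*(l*b₂ - L*a₂) := by
    linear_combination (-(a₁*a₂))*hRl + (-(l*r))*hDdef
  have hslack1 : 0 ≤ a₁*R - (a₁-b₁)*r := by linarith
  have hslack2 : 0 ≤ l*b₂ - L*a₂ := by linarith
  have hstar : l*r*D ≤ a₁*a₂ := by
    have p1 : 0 ≤ a₂*l*(a₁*R - (a₁-b₁)*r) :=
      mul_nonneg (mul_nonneg hA₂.le (by omega)) hslack1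
    have p2 : 0 ≤ a₁*r*(l*b₂ - L*a₂) :=
      mul_nonneg (mul_nonneg hA₁.le (by omega)) hslack2
    linarith [ID]
  have hmlr0 : m = l + r := by omega
  -- Case 1 : l = 1
  rcases eq_or_lt_of_le hl1 with hl|hl2
  · have hLle : L ≤ 0 := by
      by_contra hcc
      push_neg at hcc
      have : 1*a₂ ≤ L*a₂ := mul_le_mul_of_nonneg_right (by omega) hA₂.le
      rw [← hl] at hL
      linarith
    have hα1' : α = 1 := by
      have e : α = 1 + L*m := by
        have := hαl
        rw [← hl] at this
        linarith
      have : L*m ≤ 0 := mul_nonpos_of_nonpos_of_nonneg hLle (by omega)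
      omega
    have hb2m : b₂*m < a₂ := by
      rw [hα1'] at hα1
      linarith
    have h3 : b₃*m < a₃ := by
      have k1 : (b₃*a₂)*m < (b₂*a₃)*m := mul_lt_mul_of_pos_right hw hn0
      have k2 : (b₂*m)*a₃ ≤ (a₂-1)*a₃ := mul_le_mul_of_nonneg_right (by omega) hA₃.le
      have k3 : (b₃*m)*a₂ < a₃*a₂ := by linarith [k1, k2, hA₃]
      exact lt_of_mul_lt_mul_right k3 hA₂.le
    exact final m α hn0 hα1 hα2 h3
  -- Case 2 : r = 1 (and l ≥ 2) : impossible
  rcases eq_or_lt_of_le hr1 with hr|hr2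
  · exfalso
    have hRm' : R*m = α + 1 := by
      have := hRm; rw [← hr] at this; linarith
    have hRpos : 1 ≤ R := by
      by_contra hcc
      push_neg at hcc
      have : R*m ≤ 0 := mul_nonpos_of_nonpos_of_nonneg (by omega) (by omega)
      omega
    have hRle : R ≤ 1 := by
      by_contra hcc
      push_neg at hcc
      have : 2*m ≤ R*m := mul_le_mul_of_nonneg_right (by omega) (by omega)
      omega
    have hαeq : α = m - 1 := by
      have : R = 1 := le_antisymm hRle hRpos
      rw [this] at hRm'; omega
    have hLeq : L = m - 2 := by
      have : R = 1 := le_antisymm hRle hRpos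
      rw [hLdef, hαeq, this]; ring
    have hleq : l = m - 1 := by omega
    have hm3 : 3 ≤ m := by omega
    have hq2 : a₂ ≤ 2*b₂ := by
      rw [hLeq, hleq] at hL
      by_contra hcc
      push_neg at hcc
      have t1 : (m-2)*(2*b₂+1) ≤ (m-2)*a₂ := mul_le_mul_of_nonneg_left (by omega) (by omega)
      have t2 : 0 ≤ (m-3)*b₂ := mul_nonneg (by omega) hb₂.le
      linarith only [t1, t2, hL, hm3]
    have hq1 : a₁ + 1 ≤ 2*b₁ := by
      by_contra hcc
      push_neg at hcc
      have t1 : b₁*a₂ ≤ b₁*(2*b₂) := mul_le_mul_of_nonneg_left hq2 hb₁.le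
      have t2 : b₂*(2*b₁) ≤ b₂*a₁ := mul_le_mul_of_nonneg_left (by omega) hb₂.le
      linarith [hu, t1, t2]
    have t1 : (a₁+1)*(a₂*a₃) ≤ (2*b₁)*(a₂*a₃) :=
      mul_le_mul_of_nonneg_right hq1 (by positivity)
    have t2 : a₂*(a₁*a₃) ≤ (2*b₂)*(a₁*a₃) :=
      mul_le_mul_of_nonneg_right hq2 (by positivity)
    have t3 : 2*(a₁*a₂) ≤ (2*b₃)*(a₁*a₂) :=
      mul_le_mul_of_nonneg_right (by omega) (by positivity)
    have t4 : 2*2 ≤ a₂*a₃ := mul_le_mul ha₂ ha₃ (by norm_num) (by omega)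
    have t5 : 2*2 ≤ a₁*a₂ := mul_le_mul ha₁ ha₂ (by norm_num) (by omega)
    have := hεb.1
    linarith [E, t1, t2, t3, t4, t5]
  -- Case 3 : l ≥ 2 and r ≥ 2
  have hkey2 : 2 ≤ (l-1)*(r-1) := by
    rcases (by omega : 3 ≤ l ∨ l = 2) with h|h
    · calc (2:ℤ) = 2*1 := by norm_num
        _ ≤ (l-1)*(r-1) := mul_le_mul (by omega) (by omega) (by norm_num) (by omega)
    · have hr3 : 3 ≤ r := by
        rcases (by omega : 3 ≤ r ∨ r = 2) with h2|h2
        · exact h2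
        · exfalso; rw [h, h2] at hRl; omega
      calc (2:ℤ) = 1*2 := by norm_num
        _ ≤ (l-1)*(r-1) := mul_le_mul (by omega) (by omega) (by norm_num) (by omega)
  have hlr1 : l + r + 1 ≤ l*r := by linarith only [hkey2]
  have hmD : m*D ≤ a₁*a₂ - D := by
    have t : (m+1)*D ≤ (l*r)*D := mul_le_mul_of_nonneg_right (by omega) (by omega)
    linarith [hstar]
  rcases hε with hε1|hεm1
  · -- ε = 1
    rw [hε1] at hD
    have conc : (m+1)*D ≤ a₁*a₂ - 1 → b₃*m < a₃ := by
      intro h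
      have t1 : b₃*((m+1)*D) ≤ b₃*(a₁*a₂-1) := mul_le_mul_of_nonneg_left h hb₃.le
      have t2 : 1*1 ≤ b₃*D := mul_le_mul (by omega) hD1 (by norm_num) (by omega)
      have t : (b₃*m)*D < a₃*D := by linarith only [t1, t2, hD, hb₃]
      exact lt_of_mul_lt_mul_right t (by omega)
    rcases lt_or_ge (m+1) (l*r) with hc|hc
    · -- room to spare
      refine final m α hn0 hα1 hα2 (conc ?_)
      have t : (m+2)*D ≤ (l*r)*D := mul_le_mul_of_nonneg_right (by omega) (by omega)
      linarith [hstar, hD1]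
    · -- l*r = m + 1, so {l,r} = {2,3}
      have hceq : l*r = m + 1 := le_antisymm hc (by omega)
      have hlr23 : (l = 2 ∧ r = 3) ∨ (l = 3 ∧ r = 2) := by
        rcases (by omega : l = 2 ∨ l = 3 ∨ 4 ≤ l) with h|h|h
        · left; refine ⟨h, ?_⟩; rw [h] at hceq; omega
        · right; refine ⟨h, ?_⟩; rw [h] at hceq; omega
        · exfalso
          have t : 3*1 ≤ (l-1)*(r-1) := mul_le_mul (by omega) (by omega) (by norm_num) (by omega)
          linarith only [t, hceq, hmlr0]
      have hm5 : m = 5 := by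
        rcases hlr23 with ⟨e1,e2⟩|⟨e1,e2⟩ <;> omega
      by_cases hs1 : a₁*R - (a₁-b₁)*r = 0 ∧ l*b₂ - L*a₂ = 0
      · -- touching case
        obtain ⟨e1, e2⟩ := hs1
        rcases hlr23 with ⟨el, er⟩|⟨el, er⟩
        · -- l = 2, r = 3 : contradiction with ordering
          exfalso
          rw [el] at e2
          rw [er] at e1
          have hLpos : 1 ≤ L := by
            by_contra hcc
            push_neg at hcc
            have : L*a₂ ≤ 0 := mul_nonpos_of_nonpos_of_nonneg (by omega) hA₂.le
            omega
          have hLle : L ≤ 1 := by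
            by_contra hcc
            push_neg at hcc
            have : 2*a₂ ≤ L*a₂ := mul_le_mul_of_nonneg_right (by omega) hA₂.le
            omega
          have hL1 : L = 1 := le_antisymm hLle hLpos
          have hR2 : R = 2 := by rw [el, er, hL1] at hRl; omega
          rw [hR2] at e1
          rw [hL1] at e2
          have ha13 : a₁ = 3*b₁ := by linarith
          have ha22 : a₂ = 2*b₂ := by linarith
          rw [ha13, ha22] at hu
          linarith only [hu, mul_pos hb₁ hb₂]
        · -- l = 3, r = 2
          rw [el] at e2
          rw [er] at e1
          have hLpos : 1 ≤ L := by
            by_contra hcc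
            push_neg at hcc
            have : L*a₂ ≤ 0 := mul_nonpos_of_nonpos_of_nonneg (by omega) hA₂.le
            omega
          have hLle : L ≤ 2 := by
            by_contra hcc
            push_neg at hcc
            have : 3*a₂ ≤ L*a₂ := mul_le_mul_of_nonneg_right (by omega) hA₂.le
            omega
          have hL1 : L = 1 := by
            rcases (by omega : L = 1 ∨ L = 2) with h|h
            · exact h
            · exfalso; rw [el, er, h] at hRl; omega
          have hR1 : R = 1 := by rw [el, er, hL1] at hRl; omega
          rw [hR1] at e1
          rw [hL1] at e2
          have ha12 : a₁ = 2*b₁ := by linarith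
          have ha23 : a₂ = 3*b₂ := by linarith
          rw [ha12, ha23] at E
          have key : b₁*(b₂*(6*b₃ - a₃)) = 1 := by linear_combination E + hε1
          have h61 : 1 ≤ 6*b₃ - a₃ := by
            by_contra hcc
            push_neg at hcc
            have t1 : b₂*(6*b₃-a₃) ≤ 0 := mul_nonpos_of_nonneg_of_nonpos hb₂.le (by omega)
            have t2 : b₁*(b₂*(6*b₃-a₃)) ≤ 0 := mul_nonpos_of_nonneg_of_nonpos hb₁.le t1
            omega
          have hbb : 1 ≤ b₂*(6*b₃ - a₃) := by
            calc (1:ℤ) = 1*1 := by norm_num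
              _ ≤ b₂*(6*b₃-a₃) := mul_le_mul (by omega) h61 (by norm_num) hb₂.le
          have hb1 : b₁ = 1 := by
            by_contra hcc
            have t : 2*1 ≤ b₁*(b₂*(6*b₃-a₃)) :=
              mul_le_mul (by omega) hbb (by norm_num) (by omega)
            omega
          rw [hb1, one_mul] at key
          have hb2 : b₂ = 1 := by
            by_contra hcc
            have t : 2*1 ≤ b₂*(6*b₃-a₃) := mul_le_mul (by omega) h61 (by norm_num) (by omega)
            omega
          rw [hb2, one_mul] at key
          have ha3 : a₃ = 6*b₃ - 1 := by omega
          rcases (by omega : b₃ = 1 ∨ 2 ≤ b₃) with hb3|hb3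
          · -- Poincaré sphere : excluded
            exfalso
            apply hP
            have q1 : a₁ = 2 := by omega
            have q2 : a₂ = 3 := by omega
            have q3 : a₃ = 5 := by omega
            rw [q1, q2, q3, hb1, hb2, hb3]
          · -- b₃ ≥ 2 : m = 5 works
            refine final m α hn0 hα1 hα2 ?_
            rw [hm5]; omega
      · -- strict slack somewhere
        refine final m α hn0 hα1 hα2 (conc ?_)
        have h6 : l*r = 6 := by rcases hlr23 with ⟨e1,e2⟩|⟨e1,e2⟩ <;> rw [e1,e2] <;> norm_num
        have hsl : 4 ≤ a₂*l*(a₁*R - (a₁-b₁)*r) + a₁*r*(l*b₂ - L*a₂) := by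
          have p1 : 0 ≤ a₂*l*(a₁*R - (a₁-b₁)*r) :=
            mul_nonneg (mul_nonneg hA₂.le (by omega)) hslack1
          have p2 : 0 ≤ a₁*r*(l*b₂ - L*a₂) :=
            mul_nonneg (mul_nonneg hA₁.le (by omega)) hslack2
          rcases (by tauto : ¬(a₁*R - (a₁-b₁)*r = 0) ∨ ¬(l*b₂ - L*a₂ = 0)) with h|h
          · have t : 2*2*1 ≤ a₂*l*(a₁*R - (a₁-b₁)*r) := by
              have q1 : 2*2 ≤ a₂*l := mul_le_mul ha₂ (by omega) (by norm_num) (by omega)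
              calc (2*2*1 : ℤ) = (2*2)*1 := by norm_num
                _ ≤ (a₂*l)*(a₁*R - (a₁-b₁)*r) :=
                  mul_le_mul q1 (by omega) (by norm_num) (by positivity)
            linarith
          · have t : 2*2*1 ≤ a₁*r*(l*b₂ - L*a₂) := by
              have q1 : 2*2 ≤ a₁*r := mul_le_mul ha₁ (by omega) (by norm_num) (by omega)
              calc (2*2*1 : ℤ) = (2*2)*1 := by norm_num
                _ ≤ (a₁*r)*(l*b₂ - L*a₂) :=
                  mul_le_mul q1 (by omega) (by norm_num) (by positivity)
            linarith
        have : l*r*D ≤ a₁*a₂ - 4 := by linarith [ID]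
        rw [h6] at this
        rw [hm5]
        linarith [hD1]
  · -- ε = -1
    rw [hεm1] at hD
    have h3 : b₃*m < a₃ := by
      have t1 : b₃*(m*D) ≤ b₃*(a₁*a₂-D) := mul_le_mul_of_nonneg_left hmD hb₃.le
      have t2 : 1*1 ≤ b₃*D := mul_le_mul (by omega) hD1 (by norm_num) (by omega)
      have t : (b₃*m)*D < a₃*D := by linarith only [t1, t2, hD, hb₃]
      exact lt_of_mul_lt_mul_right t (by omega)
    exact final m α hn0 hα1 hα2 h3
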